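/- arXiv:0805.1401 — 3 statements merged into one kernel-verified Lean document; each statement's English description precedes it below -/
import Mathlib

section
/- Let (X, dist) be a metric space, let n ≥ 1 be an integer, let ε ∈ (0, 1], let h > 0, and let k be an integer with 1 ≤ k < 2n. Let p₀, …, p_{k+1} and p'₀, …, p'_{k+1} be points of X with p'₀ = p₀ and p'_{k+1} = p_{k+1}, such that dist(p_i, p'_i) ≤ εh/(4n) for every i ∈ {1, …, k}, and dist(p₀, p₁) ≥ h. Then Σ_{i=0}^{k} dist(p'_i, p'_{i+1}) < (1 + ε) · Σ_{i=0}^{k} dist(p_i, p_{i+1}). -/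
open Finset

/-- Approximation factor lemma for uniformly spaced Steiner points, abstract form. -/
theorem uniform_steiner_approx {X : Type*} [MetricSpace X] (n : ℕ) (hn : 1 ≤ n)
    (ε h : ℝ) (hε0 : 0 < ε) (hε1 : ε ≤ 1) (hh : 0 < h)
    (k : ℕ) (hk1 : 1 ≤ k) (hk2 : k < 2 * n)
    (p p' : ℕ → X) (h0 : p' 0 = p 0) (hklast : p' (k + 1) = p (k + 1))
    (hpert : ∀ i ∈ Icc 1 k, dist (p i) (p' i) ≤ ε * h / (4 * n))
    (hfirst : h ≤ dist (p 0) (p 1)) :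
    ∑ i ∈ range (k + 1), dist (p' i) (p' (i + 1)) <
      (1 + ε) * ∑ i ∈ range (k + 1), dist (p i) (p (i + 1)) := by
  set c : ℝ := ε * h / (4 * n) with hc
  have hn' : (0:ℝ) < n := by exact_mod_cast hn
  have hc0 : 0 < c := by positivity
  set S := ∑ i ∈ range (k + 1), dist (p i) (p (i + 1)) with hS
  -- triangle inequality termwise
  have hD : ∀ i ∈ range (k+1), dist (p' i) (p' (i+1)) ≤
      dist (p i) (p' i) + dist (p i) (p (i+1)) + dist (p (i+1)) (p' (i+1)) := by
    intro i _
    calc dist (p' i) (p' (i+1)) ≤ dist (p' i) (p i) + dist (p i) (p' (i+1)) :=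
          dist_triangle _ _ _
      _ ≤ dist (p' i) (p i) + (dist (p i) (p (i+1)) + dist (p (i+1)) (p' (i+1))) := by
          gcongr; exact dist_triangle _ _ _
      _ = _ := by rw [dist_comm (p' i)]; ring
  have hsum : ∑ i ∈ range (k+1), dist (p' i) (p' (i+1)) ≤
      S + (∑ i ∈ range (k+1), dist (p i) (p' i)
        + ∑ i ∈ range (k+1), dist (p (i+1)) (p' (i+1))) := by
    calc ∑ i ∈ range (k+1), dist (p' i) (p' (i+1))
        ≤ ∑ i ∈ range (k+1), (dist (p i) (p' i) + dist (p i) (p (i+1))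
            + dist (p (i+1)) (p' (i+1))) := Finset.sum_le_sum hD
      _ = _ := by rw [Finset.sum_add_distrib, Finset.sum_add_distrib]; ring
  have hmid : ∀ i ∈ range k, dist (p (i+1)) (p' (i+1)) ≤ c := by
    intro i hi
    exact hpert (i+1) (by simp at hi ⊢; omega)
  have hsum1 : ∑ i ∈ range (k+1), dist (p i) (p' i) ≤ k * c := by
    rw [Finset.sum_range_succ']
    have h00 : dist (p 0) (p' 0) = 0 := by rw [h0, dist_self]
    rw [h00, add_zero]
    calc ∑ i ∈ range k, dist (p (i+1)) (p' (i+1)) ≤ ∑ _i ∈ range k, c :=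
          Finset.sum_le_sum hmid
      _ = k * c := by simp [mul_comm]
  have hsum2 : ∑ i ∈ range (k+1), dist (p (i+1)) (p' (i+1)) ≤ k * c := by
    rw [Finset.sum_range_succ]
    have hkk : dist (p (k+1)) (p' (k+1)) = 0 := by rw [hklast, dist_self]
    rw [hkk, add_zero]
    calc ∑ i ∈ range k, dist (p (i+1)) (p' (i+1)) ≤ ∑ _i ∈ range k, c :=
          Finset.sum_le_sum hmid
      _ = k * c := by simp [mul_comm]
  -- S ≥ h
  have hSh : h ≤ S := by
    refine le_trans hfirst ?_
    exact Finset.single_le_sum (f := fun i => dist (p i) (p (i+1)))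
      (fun i _ => dist_nonneg) (Finset.mem_range.2 (by omega))
  -- 2 k c < ε h ≤ ε S
  have h2k : (2:ℝ) * k * c < ε * h := by
    have hk2' : (k:ℝ) < 2 * n := by exact_mod_cast hk2
    have : (2:ℝ) * k < 4 * n := by linarith
    have hεh : ε * h = (4 * n) * c := by rw [hc]; field_simp
    nlinarith [hc0]
  have hεS : ε * h ≤ ε * S := by nlinarith
  calc ∑ i ∈ range (k+1), dist (p' i) (p' (i+1))
      ≤ S + (k * c + k * c) := by linarith [hsum, hsum1, hsum2]
    _ < S + ε * S := by linarith
    _ = (1 + ε) * S := by ring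
end

section
/- Let (X, dist) be a metric space, let n ≥ 1 be an integer, let ε ∈ (0, 1], let h > 0, and let k be an integer with 1 ≤ k < 2n. Let p₀, …, p_{k+1} and p'₀, …, p'_{k+1} be points of X with p'₀ = p₀ and p'_{k+1} = p_{k+1}, such that dist(p_i, p'_i) ≤ (ε/6) · dist(p_{i−1}, p_i) + εh/(6n) for every i ∈ {1, …, k}, and Σ_{i=0}^{k} dist(p_i, p_{i+1}) ≥ h. Then Σ_{i=0}^{k} dist(p'_i, p'_{i+1}) < (1 + ε) · Σ_{i=0}^{k} dist(p_i, p_{i+1}). -/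
open Finset

/-- Approximation factor lemma for Steiner points in geometric progression, abstract form. -/
theorem geometric_steiner_approx {X : Type*} [MetricSpace X] (n : ℕ) (hn : 1 ≤ n)
    (ε h : ℝ) (hε0 : 0 < ε) (hε1 : ε ≤ 1) (hh : 0 < h)
    (k : ℕ) (hk1 : 1 ≤ k) (hk2 : k < 2 * n)
    (p p' : ℕ → X) (h0 : p' 0 = p 0) (hklast : p' (k + 1) = p (k + 1))
    (hpert : ∀ i ∈ Icc 1 k,
      dist (p i) (p' i) ≤ (ε / 6) * dist (p (i - 1)) (p i) + ε * h / (6 * n))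
    (hlen : h ≤ ∑ i ∈ range (k + 1), dist (p i) (p (i + 1))) :
    ∑ i ∈ range (k + 1), dist (p' i) (p' (i + 1)) <
      (1 + ε) * ∑ i ∈ range (k + 1), dist (p i) (p (i + 1)) := by
  set L := ∑ i ∈ range (k + 1), dist (p i) (p (i + 1)) with hL
  set D : ℕ → ℝ := fun i => dist (p i) (p' i) with hD
  have hD0 : D 0 = 0 := by simp [hD, h0]
  have hDk : D (k + 1) = 0 := by simp [hD, hklast]
  set T := ∑ i ∈ range k, D (i + 1) with hT
  -- sum of first-coordinate offsets
  have hsum1 : ∑ i ∈ range (k + 1), D i = T := by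
    rw [Finset.sum_range_succ', hD0, add_zero]
  have hsum2 : ∑ i ∈ range (k + 1), D (i + 1) = T := by
    rw [Finset.sum_range_succ, hDk, add_zero]
  -- partial sum bound
  have hLpart : ∑ i ∈ range k, dist (p i) (p (i + 1)) ≤ L := by
    apply Finset.sum_le_sum_of_subset_of_nonneg
    · exact Finset.range_subset_range.mpr (Nat.le_succ k)
    · intro i _ _; exact dist_nonneg
  -- bound on T
  have hTle : T ≤ (ε / 6) * L + (k : ℝ) * (ε * h / (6 * n)) := by
    have h1 : T ≤ ∑ i ∈ range k, ((ε / 6) * dist (p i) (p (i + 1)) + ε * h / (6 * n)) := by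
      apply Finset.sum_le_sum
      intro i hi
      have hi' : i + 1 ∈ Icc 1 k := by
        simp only [Finset.mem_range] at hi
        simp [Nat.succ_le_iff, hi]
      have := hpert (i + 1) hi'
      simpa using this
    rw [Finset.sum_add_distrib, ← Finset.mul_sum, Finset.sum_const, nsmul_eq_mul,
      Finset.card_range] at h1
    have h2 : (ε / 6) * ∑ i ∈ range k, dist (p i) (p (i + 1)) ≤ (ε / 6) * L := by
      apply mul_le_mul_of_nonneg_left hLpart (by linarith)
    linarith
  -- triangle inequality bound
  have htri : ∑ i ∈ range (k + 1), dist (p' i) (p' (i + 1)) ≤ L + 2 * T := by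
    have h1 : ∑ i ∈ range (k + 1), dist (p' i) (p' (i + 1)) ≤
        ∑ i ∈ range (k + 1), (D i + dist (p i) (p (i + 1)) + D (i + 1)) := by
      apply Finset.sum_le_sum
      intro i _
      have := dist_triangle4 (p' i) (p i) (p (i + 1)) (p' (i + 1))
      simpa [hD, dist_comm] using this
    rw [Finset.sum_add_distrib, Finset.sum_add_distrib, hsum1, hsum2] at h1
    linarith
  have hn' : (1 : ℝ) ≤ n := by exact_mod_cast hn
  have hk2' : (k : ℝ) < 2 * n := by exact_mod_cast hk2
  have hLpos : 0 < L := lt_of_lt_of_le hh hlen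
  have hkT : (k : ℝ) * (ε * h / (6 * n)) < ε * L / 3 := by
    have heq : (k : ℝ) * (ε * h / (6 * n)) = (k * ε * h) / (6 * n) := by ring
    rw [heq, div_lt_div_iff₀ (by positivity) (by norm_num)]
    have h1 : (k : ℝ) * h < 2 * n * h := mul_lt_mul_of_pos_right hk2' hh
    have h2 : 2 * (n : ℝ) * h ≤ 2 * n * L :=
      mul_le_mul_of_nonneg_left hlen (by positivity)
    nlinarith [mul_lt_mul_of_pos_left (lt_of_lt_of_le h1 h2) hε0]
  calc ∑ i ∈ range (k + 1), dist (p' i) (p' (i + 1)) ≤ L + 2 * T := htri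
    _ ≤ L + 2 * ((ε / 6) * L + (k : ℝ) * (ε * h / (6 * n))) := by linarith
    _ < (1 + ε) * L := by nlinarith
end

section
/- In ℝ³, let ℓ be an affine subspace containing the point v, let w be a point with dist(v, w) ≤ L and infDist(w, ℓ) ≥ h, where 0 < h ≤ L, and let ε > 0. Let t ∈ [0, 1], set p = v + t·(w − v), and let p' be a point with dist(p, p') ≤ (εh/(6L)) · dist(v, p). Then for every point u ∈ ℓ one has dist(p, p') ≤ (ε/6) · dist(u, p). -/
/-- The far-offset lemma in abstract form. -/
theorem far_offset (ℓ : AffineSubspace ℝ (EuclideanSpace ℝ (Fin 3)))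
    (v : EuclideanSpace ℝ (Fin 3)) (hv : v ∈ ℓ)
    (w : EuclideanSpace ℝ (Fin 3)) (L h ε : ℝ)
    (hL : dist v w ≤ L) (hwℓ : h ≤ Metric.infDist w (ℓ : Set (EuclideanSpace ℝ (Fin 3))))
    (hh0 : 0 < h) (hhL : h ≤ L) (hε : 0 < ε)
    (t : ℝ) (ht0 : 0 ≤ t) (ht1 : t ≤ 1)
    (p p' : EuclideanSpace ℝ (Fin 3)) (hp : p = v + t • (w - v))
    (hp' : dist p p' ≤ (ε * h / (6 * L)) * dist v p) :
    ∀ u ∈ ℓ, dist p p' ≤ (ε / 6) * dist u p := by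
  intro u hu
  have hL0 : 0 < L := lt_of_lt_of_le hh0 hhL
  have hdvp : dist v p = t * dist v w := by
    rw [dist_eq_norm, dist_eq_norm, hp]
    have : v - (v + t • (w - v)) = t • (v - w) := by
      module
    rw [this, norm_smul, Real.norm_eq_abs, abs_of_nonneg ht0]
  rcases eq_or_lt_of_le ht0 with h0 | h0
  · have hvp0 : dist v p = 0 := by rw [hdvp, ← h0]; ring
    rw [hvp0, mul_zero] at hp'
    have h1 : dist p p' = 0 := le_antisymm hp' dist_nonneg
    rw [h1]
    positivity
  · set q : EuclideanSpace ℝ (Fin 3) := t⁻¹ • (u - v) + v with hq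
    have hqℓ : q ∈ ℓ := by
      have := AffineSubspace.smul_vsub_vadd_mem ℓ t⁻¹ hu hv hv
      simpa [hq, vsub_eq_sub, vadd_eq_add] using this
    have hqw : h ≤ dist q w := by
      have h1 : Metric.infDist w (ℓ : Set (EuclideanSpace ℝ (Fin 3))) ≤ dist w q :=
        Metric.infDist_le_dist_of_mem hqℓ
      rw [dist_comm] at h1
      linarith
    have hup : dist u p = t * dist q w := by
      rw [dist_eq_norm, dist_eq_norm, hp]
      have : u - (v + t • (w - v)) = t • (q - w) := by
        rw [hq]
        have := mul_inv_cancel₀ (ne_of_gt h0)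
        match_scalars <;> field_simp <;> ring
      rw [this, norm_smul, Real.norm_eq_abs, abs_of_nonneg ht0]
    have hqw0 : (0:ℝ) ≤ dist q w := dist_nonneg
    have key : dist p p' ≤ ε * h * t / 6 := by
      have : (ε * h / (6 * L)) * dist v p ≤ ε * h * t / 6 := by
        rw [hdvp]
        rw [div_mul_eq_mul_div, div_le_div_iff₀ (by positivity) (by norm_num)]
        nlinarith [mul_le_mul_of_nonneg_left hL (mul_nonneg (mul_nonneg hε.le hh0.le) ht0)]
      linarith
    have : ε * h * t / 6 ≤ (ε / 6) * dist u p := by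
      rw [hup]
      nlinarith [mul_le_mul_of_nonneg_left hqw (mul_nonneg hε.le ht0)]
    linarith
end
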